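/- The Shapley–Taylor interaction index satisfies the dummy axiom: if i ∈ N is a dummy player for a game v, i.e. v(S) = v(S∖{i}) + v({i}) for every S ⊆ N with i ∈ S, then I_{{i}}(v) = v({i}), and I_S(v) = 0 for every S containing i with 2 ≤ |S| ≤ k. -/
import Mathlib


/-- Discrete derivative of a game `v` with respect to the set `S`, evaluated at `T`. -/
noncomputable def ddiff {n : ℕ} (S : Finset (Fin n)) (v : Finset (Fin n) → ℝ)
    (T : Finset (Fin n)) : ℝ :=
  ∑ W ∈ S.powerset, (-1 : ℝ) ^ (S.card - W.card) * v (W ∪ T)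

/-- The set `π^S` of players that precede every member of `S` in the ordering `π`
(player at position `p` is `π p`, so `i` precedes `j` iff `π.symm i < π.symm j`). -/
def preceders {n : ℕ} (π : Equiv.Perm (Fin n)) (S : Finset (Fin n)) : Finset (Fin n) :=
  Finset.univ.filter fun j => ∀ i ∈ S, π.symm j < π.symm i

/-- Per-permutation Shapley-Taylor value `I_{S,π}(v)` for order of explanation `k`. -/
noncomputable def stvPerm {n : ℕ} (k : ℕ) (S : Finset (Fin n)) (π : Equiv.Perm (Fin n))
    (v : Finset (Fin n) → ℝ) : ℝ :=
  if S.card < k then ddiff S v ∅ else ddiff S v (preceders π S)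

/-- The Shapley-Taylor interaction index `I_S(v)`: the average of `I_{S,π}(v)`
over all orderings `π`. -/
noncomputable def stv {n : ℕ} (k : ℕ) (S : Finset (Fin n)) (v : Finset (Fin n) → ℝ) : ℝ :=
  (1 / (Nat.factorial n : ℝ)) * ∑ π : Equiv.Perm (Fin n), stvPerm k S π v

lemma neg_one_pow_sub_real (a w : ℕ) (h : w ≤ a) :
    ((-1 : ℝ)) ^ (a - w) = (-1) ^ a * (-1) ^ w := by
  obtain ⟨c, rfl⟩ := Nat.exists_eq_add_of_le h
  rw [Nat.add_sub_cancel_left, ← pow_add, show w + c + w = 2 * w + c by ring,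
    pow_add, pow_mul]
  norm_num

lemma ddiff_dummy {n : ℕ} (v : Finset (Fin n) → ℝ) (i : Fin n)
    (hdummy : ∀ S : Finset (Fin n), i ∈ S → v S = v (S \ {i}) + v {i})
    (S T : Finset (Fin n)) (hiS : i ∈ S) (hiT : i ∉ T) :
    ddiff S v T = if S \ {i} = ∅ then v {i} else 0 := by
  classical
  set A := S \ {i} with hA
  have hiA : i ∉ A := by simp [hA]
  have hSA : S = insert i A := by
    ext x
    by_cases hx : x = i
    · simp [hA, hx, hiS]
    · simp [hA, hx]
  have hcard : S.card = A.card + 1 := by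
    rw [hSA, Finset.card_insert_of_notMem hiA]
  rw [ddiff, hSA, Finset.sum_powerset_insert hiA, ← Finset.sum_add_distrib]
  have key : ∀ W ∈ A.powerset,
      (-1 : ℝ) ^ ((insert i A).card - W.card) * v (W ∪ T) +
        (-1 : ℝ) ^ ((insert i A).card - (insert i W).card) * v (insert i W ∪ T)
      = (-1 : ℝ) ^ A.card * (-1 : ℝ) ^ W.card * v {i} := by
    intro W hW
    rw [Finset.mem_powerset] at hW
    have hiW : i ∉ W := fun h => hiA (hW h)
    have hwA : W.card ≤ A.card := Finset.card_le_card hW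
    have hiWT : i ∉ W ∪ T := by simp [hiW, hiT]
    have hv : v (insert i W ∪ T) = v (W ∪ T) + v {i} := by
      have h1 : insert i W ∪ T = insert i (W ∪ T) := by
        simp [Finset.insert_union]
      rw [h1, hdummy _ (Finset.mem_insert_self _ _),
        Finset.insert_sdiff_of_mem _ (Finset.mem_singleton_self i),
        Finset.sdiff_singleton_eq_erase, Finset.erase_eq_of_notMem hiWT]
    have hc1 : (insert i A).card - W.card = (A.card - W.card) + 1 := by
      rw [← hSA, hcard]; omega
    have hc2 : (insert i A).card - (insert i W).card = A.card - W.card := by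
      rw [← hSA, hcard, Finset.card_insert_of_notMem hiW]; omega
    rw [hc1, hc2, hv, pow_succ, neg_one_pow_sub_real _ _ hwA]
    ring
  rw [Finset.sum_congr rfl key, ← Finset.sum_mul, ← Finset.mul_sum]
  have hsum : (∑ W ∈ A.powerset, (-1 : ℝ) ^ W.card) = if A = ∅ then 1 else 0 := by
    have := Finset.sum_powerset_neg_one_pow_card (x := A)
    have h2 : ((∑ m ∈ A.powerset, (-1 : ℤ) ^ m.card : ℤ) : ℝ)
        = ∑ W ∈ A.powerset, (-1 : ℝ) ^ W.card := by push_cast; ring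
    rw [← h2, this]
    split <;> norm_num
  rw [hsum]
  by_cases hAe : A = ∅
  · rw [if_pos hAe, if_pos hAe, hAe]
    simp
  · rw [if_neg hAe, if_neg hAe]
    ring

lemma notMem_preceders {n : ℕ} (π : Equiv.Perm (Fin n)) (S : Finset (Fin n))
    (i : Fin n) (hiS : i ∈ S) : i ∉ preceders π S := by
  intro h
  rw [preceders, Finset.mem_filter] at h
  exact lt_irrefl _ (h.2 i hiS)

/-- The Shapley-Taylor interaction index satisfies the dummy axiom:
if `i` is a dummy player for `v`, then `I_{{i}}(v) = v({i})` and `I_S(v) = 0` for every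
`S` containing `i` with `2 ≤ |S| ≤ k`. -/
theorem stv_dummy {n k : ℕ} (hk1 : 1 ≤ k) (hkn : k ≤ n)
    (v : Finset (Fin n) → ℝ) (i : Fin n)
    (hdummy : ∀ S : Finset (Fin n), i ∈ S → v S = v (S \ {i}) + v {i}) :
    stv k {i} v = v {i} ∧
      ∀ S : Finset (Fin n), i ∈ S → 2 ≤ S.card → S.card ≤ k → stv k S v = 0 := by
  constructor
  · have hperm : ∀ π : Equiv.Perm (Fin n), stvPerm k {i} π v = v {i} := by
      intro π
      rw [stvPerm]
      have h1 : ({i} : Finset (Fin n)) \ {i} = ∅ := by simp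
      split
      · rw [ddiff_dummy v i hdummy _ _ (Finset.mem_singleton_self i) (Finset.notMem_empty i),
          h1, if_pos rfl]
      · rw [ddiff_dummy v i hdummy _ _ (Finset.mem_singleton_self i)
          (notMem_preceders π _ i (Finset.mem_singleton_self i)), h1, if_pos rfl]
    rw [stv, Finset.sum_congr rfl (fun π _ => hperm π), Finset.sum_const,
      Finset.card_univ, Fintype.card_perm, Fintype.card_fin, nsmul_eq_mul]
    have : (Nat.factorial n : ℝ) ≠ 0 := Nat.cast_ne_zero.2 (Nat.factorial_ne_zero n)
    field_simp
  · intro S hiS h2 hk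
    have hne : S \ {i} ≠ ∅ := by
      intro h
      have := Finset.card_sdiff_of_subset (by simpa using hiS : ({i} : Finset (Fin n)) ⊆ S)
      rw [h] at this
      simp at this
      omega
    have hperm : ∀ π : Equiv.Perm (Fin n), stvPerm k S π v = 0 := by
      intro π
      rw [stvPerm]
      split
      · rw [ddiff_dummy v i hdummy _ _ hiS (Finset.notMem_empty i), if_neg hne]
      · rw [ddiff_dummy v i hdummy _ _ hiS (notMem_preceders π S i hiS), if_neg hne]
    rw [stv, Finset.sum_congr rfl (fun π _ => hperm π)]
    simp
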